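/- Let ρ be a density matrix on ℂ^d and let (ρ_n)_n, with ρ_n a density matrix on (ℂ^d)^⊗n, be weakly almost i.i.d. along ρ. Let M = {M_x}_{x∈X} be a POVM on ℂ^d with finite outcome set X, and set p(x) := Tr(ρ M_x). Let ℙ_n denote probability with respect to the distribution p_n on X^n given by p_n(x₁,…,x_n) := Tr[ρ_n (M_{x₁}⊗…⊗M_{x_n})], and for (X₁,…,X_n) ∼ p_n define the empirical frequencies p̂_n(x) := (1/n) Σ_{i=1}^n 1_{{X_i = x}} for x ∈ X. Then for every δ > 0, ℙ_n( max_{x∈X} |p̂_n(x) − p(x)| > δ ) → 0 as n → ∞. -/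

import Mathlib

open scoped BigOperators ComplexOrder
open Matrix Filter

noncomputable section

/-- Square matrices on `ℂ^d`. -/
abbrev Mat (d : ℕ) := Matrix (Fin d) (Fin d) ℂ

/-- Operators on the `n`-fold tensor power `(ℂ^d)^⊗n`, identified with matrices indexed by
`Fin n → Fin d`. -/
abbrev MatN (d n : ℕ) := Matrix (Fin n → Fin d) (Fin n → Fin d) ℂ

/-- A density matrix: positive semidefinite with unit trace. -/
def IsDensity {m : Type*} [Fintype m] [DecidableEq m] (ρ : Matrix m m ℂ) : Prop :=
  ρ.PosSemidef ∧ ρ.trace = 1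

/-- The square root of a positive semidefinite matrix, as `Matrix.PosSemidef.sqrt` was defined
in Mathlib of December 2024 (that definition has since been removed). -/
noncomputable def psdSqrtOld {m : Type*} [Fintype m] [DecidableEq m] {A : Matrix m m ℂ}
    (hA : A.PosSemidef) : Matrix m m ℂ :=
  (hA.1.eigenvectorUnitary : Matrix m m ℂ) *
    Matrix.diagonal ((↑) ∘ (fun x : ℝ => Real.sqrt x) ∘ hA.1.eigenvalues) *
    (star hA.1.eigenvectorUnitary : Matrix m m ℂ)

/-- The trace norm `‖X‖₁ = Tr √(XᴴX)`. -/
noncomputable def traceNorm {m : Type*} [Fintype m] [DecidableEq m] (X : Matrix m m ℂ) : ℝ :=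
  ((psdSqrtOld (Matrix.posSemidef_conjTranspose_mul_self X)).trace).re

/-- The `n`-fold tensor power `ρ^⊗n`. -/
def tpow {d : ℕ} (ρ : Mat d) (n : ℕ) : MatN d n := fun x y => ∏ i, ρ (x i) (y i)

/-- The tensor power of `ρ` over the sites in `I ⊆ [n]`. -/
def tpowOn {d n : ℕ} (ρ : Mat d) (I : Finset (Fin n)) :
    Matrix ((i : I) → Fin d) ((i : I) → Fin d) ℂ := fun x y => ∏ i, ρ (x i) (y i)

/-- Combine a configuration on `I` with a configuration on its complement. -/
def combine {α : Type*} {n : ℕ} (I : Finset (Fin n)) (x : (i : I) → α)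
    (c : (j : {j : Fin n // j ∉ I}) → α) : Fin n → α :=
  fun j => if h : j ∈ I then x ⟨j, h⟩ else c ⟨j, h⟩

/-- The marginal (partial trace over the sites outside `I`) of a state on `(ℂ^d)^⊗n`. -/
noncomputable def marginal {d n : ℕ} (ρn : MatN d n) (I : Finset (Fin n)) :
    Matrix ((i : I) → Fin d) ((i : I) → Fin d) ℂ :=
  fun x y => ∑ c : (j : {j : Fin n // j ∉ I}) → Fin d, ρn (combine I x c) (combine I y c)

/-- A sequence of states `ρ_n` on `(ℂ^d)^⊗n` is weakly almost i.i.d. along `ρ` if for each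
fixed `k ≥ 1` the average over all `k`-element subsets `I ⊆ [n]` of
`‖(ρ_n)_I − ρ^⊗k‖₁` tends to `0` as `n → ∞`. -/
def WeaklyAlmostIID {d : ℕ} (ρ : Mat d) (ρseq : ∀ n, MatN d n) : Prop :=
  ∀ k : ℕ, 0 < k →
    Tendsto (fun n : ℕ =>
        (∑ I ∈ Finset.powersetCard k (Finset.univ : Finset (Fin n)),
          traceNorm (marginal (ρseq n) I - tpowOn ρ I)) / (n.choose k : ℝ))
      atTop (nhds 0)

/-- `A^(i) = 1 ⊗ ⋯ ⊗ A ⊗ ⋯ ⊗ 1` with `A` in the `i`-th tensor factor. -/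
def embedAt {d : ℕ} (n : ℕ) (A : Mat d) (i : Fin n) : MatN d n :=
  fun x y => if ∀ j, j ≠ i → x j = y j then A (x i) (y i) else 0

/-- The empirical average `Ā_n = (1/n) Σ_i A^(i)`. -/
noncomputable def avgObs {d : ℕ} (n : ℕ) (A : Mat d) : MatN d n :=
  (n : ℂ)⁻¹ • ∑ i : Fin n, embedAt n A i

open Classical in
/-- The spectral projection of a Hermitian matrix `Q` onto the span of eigenvectors whose
eigenvalue satisfies the predicate `S` (junk value `0` if `Q` is not Hermitian). -/
noncomputable def specProj {m : Type*} [Fintype m] [DecidableEq m]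
    (S : ℝ → Prop) (Q : Matrix m m ℂ) : Matrix m m ℂ :=
  if hQ : Q.IsHermitian then
    (hQ.eigenvectorUnitary : Matrix m m ℂ) *
      Matrix.diagonal (fun i => if S (hQ.eigenvalues i) then (1 : ℂ) else 0) *
      star (hQ.eigenvectorUnitary : Matrix m m ℂ)
  else 0

open Classical in
/-- Functional calculus for a Hermitian matrix (junk value `0` if not Hermitian). -/
noncomputable def mfun {m : Type*} [Fintype m] [DecidableEq m]
    (f : ℝ → ℝ) (Q : Matrix m m ℂ) : Matrix m m ℂ :=
  if hQ : Q.IsHermitian then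
    (hQ.eigenvectorUnitary : Matrix m m ℂ) *
      Matrix.diagonal (fun i => (f (hQ.eigenvalues i) : ℂ)) *
      star (hQ.eigenvectorUnitary : Matrix m m ℂ)
  else 0

/-- The matrix logarithm (base 2) via functional calculus. -/
noncomputable def matLog {m : Type*} [Fintype m] [DecidableEq m] (Q : Matrix m m ℂ) :
    Matrix m m ℂ := mfun (Real.logb 2) Q

/-- The von Neumann entropy `S(ρ) = −Tr(ρ log ρ)` (base-2 logarithm, on the support). -/
noncomputable def vN {m : Type*} [Fintype m] [DecidableEq m] (ρ : Matrix m m ℂ) : ℝ :=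
  -(Matrix.trace (ρ * matLog ρ)).re

/-- The operator norm `‖A‖_∞`. -/
noncomputable def opNorm {m : Type*} [Fintype m] [DecidableEq m] (A : Matrix m m ℂ) : ℝ :=
  ‖Matrix.toEuclideanCLM (𝕜 := ℂ) A‖


/-- The tensor-product POVM element `M_{x₁} ⊗ ⋯ ⊗ M_{x_n}`. -/
def povmTensor {d : ℕ} {X : Type*} (M : X → Mat d) {n : ℕ} (xs : Fin n → X) : MatN d n :=
  fun a b => ∏ i, M (xs i) (a i) (b i)

end

section SqrtAux
open Matrix
open scoped ComplexOrder

lemma psdSqrtOld_eq_cfc {m : Type*} [Fintype m] [DecidableEq m] {A : Matrix m m ℂ}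
    (hA : A.PosSemidef) : psdSqrtOld hA = cfc Real.sqrt A := by
  rw [hA.1.cfc_eq, IsHermitian.cfc, Unitary.conjStarAlgAut_apply]
  rfl

lemma psdSqrtOld_psd {m : Type*} [Fintype m] [DecidableEq m] {A : Matrix m m ℂ}
    (hA : A.PosSemidef) : (psdSqrtOld hA).PosSemidef := by
  have hd : (Matrix.diagonal ((↑) ∘ (fun x : ℝ => Real.sqrt x) ∘ hA.1.eigenvalues :
      m → ℂ)).PosSemidef := by
    refine Matrix.posSemidef_diagonal_iff.mpr fun i => ?_
    simp only [Function.comp_apply]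
    rw [Complex.zero_le_real]
    exact Real.sqrt_nonneg _
  have := hd.mul_mul_conjTranspose_same (hA.1.eigenvectorUnitary : Matrix m m ℂ)
  rw [← Matrix.star_eq_conjTranspose] at this
  exact this

open scoped MatrixOrder in
lemma psdSqrtOld_mul_self {m : Type*} [Fintype m] [DecidableEq m] {A : Matrix m m ℂ}
    (hA : A.PosSemidef) : psdSqrtOld hA * psdSqrtOld hA = A := by
  rw [psdSqrtOld_eq_cfc, ← cfc_mul ..]
  conv_rhs => rw [← cfc_id' ℝ A]
  refine cfc_congr fun x hx => ?_
  exact Real.mul_self_sqrt (spectrum_nonneg_of_nonneg hA.nonneg hx)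

open scoped MatrixOrder in
lemma psdSqrtOld_unique {m : Type*} [Fintype m] [DecidableEq m] {A K : Matrix m m ℂ}
    (hA : A.PosSemidef) (hK : K.PosSemidef) (h : K * K = A) : K = psdSqrtOld hA := by
  rw [psdSqrtOld_eq_cfc, ← cfcₙ_eq_cfc, ← CFC.sqrt_eq_real_sqrt A hA.nonneg]
  exact (CFC.sqrt_unique h hK.nonneg).symm

end SqrtAux
section Toolbox
open Matrix
open scoped Classical

namespace PTAux

noncomputable def tens {d : ℕ} {ι : Type*} [Fintype ι] (N : ι → Mat d) :
    Matrix (ι → Fin d) (ι → Fin d) ℂ := Matrix.of fun a b => ∏ i, N i (a i) (b i)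

lemma tens_apply {d : ℕ} {ι : Type*} [Fintype ι] (N : ι → Mat d) (a b : ι → Fin d) :
    tens N a b = ∏ i, N i (a i) (b i) := rfl

variable {d : ℕ} {ι : Type*} [Fintype ι] [DecidableEq ι]

lemma tens_mul (N P : ι → Mat d) : tens N * tens P = tens (fun i => N i * P i) := by
  ext a b
  simp only [Matrix.mul_apply, tens_apply, ← Finset.prod_mul_distrib]
  exact (Fintype.prod_sum fun i s => N i (a i) s * P i s (b i)).symm

lemma tens_one : tens (fun _ : ι => (1 : Mat d)) = 1 := by
  ext a b
  simp only [tens_apply, Matrix.one_apply, Finset.prod_boole]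
  by_cases h : a = b
  · simp [h]
  · simp only [h, if_false, ite_eq_right_iff, one_ne_zero]
    intro hall
    exact h (funext fun i => hall i (Finset.mem_univ i))

lemma tens_conjTranspose (N : ι → Mat d) : (tens N)ᴴ = tens (fun i => (N i)ᴴ) := by
  ext a b
  simp only [Matrix.conjTranspose_apply, tens_apply]
  rw [← starRingEnd_apply, map_prod]
  simp [← starRingEnd_apply]

lemma tens_psd {N : ι → Mat d} (h : ∀ i, (N i).PosSemidef) : (tens N).PosSemidef := by
  choose B hB using fun i => (⟨psdSqrtOld (h i), by
    rw [(psdSqrtOld_psd (h i)).isHermitian.eq, psdSqrtOld_mul_self]⟩ : ∃ B : Mat d, N i = Bᴴ * B)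
  have hN : N = fun i => (B i)ᴴ * B i := funext hB
  rw [hN, ← tens_mul, ← tens_conjTranspose]
  exact Matrix.posSemidef_conjTranspose_mul_self _

lemma trace_tens (N : ι → Mat d) : (tens N).trace = ∏ i, (N i).trace := by
  simp only [Matrix.trace, Matrix.diag, tens_apply]
  exact (Fintype.prod_sum fun i s => N i s s).symm

lemma sum_tens {X : Type*} [Fintype X] (M : X → Mat d) (hM1 : ∑ x, M x = 1) :
    ∑ f : ι → X, tens (fun i => M (f i)) = 1 := by
  have : ∑ f : ι → X, tens (fun i => M (f i)) = tens (fun _ : ι => ∑ x, M x) := by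
    ext a b
    rw [Matrix.sum_apply]
    simp only [tens_apply, Matrix.sum_apply]
    exact (Fintype.prod_sum fun i x => M x (a i) (b i)).symm
  rw [this, hM1, tens_one]

lemma psd_sum {m : Type*} [Fintype m] {α : Type*} (s : Finset α) (f : α → Matrix m m ℂ)
    (h : ∀ a ∈ s, (f a).PosSemidef) : (∑ a ∈ s, f a).PosSemidef :=
  Finset.sum_induction f _ (fun _ _ hA hB => hA.add hB) Matrix.PosSemidef.zero h

lemma one_sub_tens_psd {X : Type*} [Fintype X] (M : X → Mat d)
    (hM : ∀ x, (M x).PosSemidef) (hM1 : ∑ x, M x = 1) (f₀ : ι → X) :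
    ((1 : Matrix (ι → Fin d) (ι → Fin d) ℂ) - tens (fun i => M (f₀ i))).PosSemidef := by
  have h := sum_tens (ι := ι) M hM1
  have he : (1 : Matrix (ι → Fin d) (ι → Fin d) ℂ) - tens (fun i => M (f₀ i))
      = ∑ f ∈ Finset.univ.erase f₀, tens (fun i => M (f i)) := by
    rw [← h]
    exact (Finset.sum_erase_eq_sub (Finset.mem_univ f₀)).symm
  rw [he]
  exact psd_sum _ _ (fun f _ => tens_psd (fun i => hM (f i)))

end PTAux
end Toolbox
namespace PTAux
open Matrix
open scoped ComplexOrder Classical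

set_option linter.unusedSectionVars false

variable {m : Type*} [Fintype m] [DecidableEq m]

lemma psd_trace_real {A : Matrix m m ℂ} (hA : A.PosSemidef) :
    A.trace = (A.trace.re : ℂ) ∧ 0 ≤ A.trace.re := by
  constructor
  · have h1 : Aᴴ.trace = A.trace := by rw [hA.isHermitian]
    rw [Matrix.trace_conjTranspose] at h1
    exact ((Complex.conj_eq_iff_re).mp h1).symm
  · have hd : ∀ i, 0 ≤ (A i i).re := by
      intro i
      have := hA.re_dotProduct_nonneg (Pi.single i 1)
      simpa [dotProduct, Matrix.mulVec, Pi.single_apply, Finset.sum_ite_eq] using this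
    calc (0:ℝ) ≤ ∑ i, (A i i).re := Finset.sum_nonneg fun i _ => hd i
    _ = A.trace.re := by simp [Matrix.trace, Matrix.diag, Complex.re_sum]

lemma psd_mul_trace_real {A B : Matrix m m ℂ} (hA : A.PosSemidef) (hB : B.PosSemidef) :
    (A * B).trace = (((A * B).trace.re : ℝ) : ℂ) ∧ 0 ≤ ((A * B).trace).re := by
  have hS := psdSqrtOld_psd hA
  have hfac : A = psdSqrtOld hA * psdSqrtOld hA := (psdSqrtOld_mul_self hA).symm
  have h1 : (A * B).trace = (psdSqrtOld hA * B * psdSqrtOld hA).trace := by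
    conv_lhs => rw [hfac]
    rw [mul_assoc, Matrix.trace_mul_comm]
  have hpsd : (psdSqrtOld hA * B * psdSqrtOld hA).PosSemidef := by
    have h2 := hB.conjTranspose_mul_mul_same (B := psdSqrtOld hA)
    rwa [hS.isHermitian] at h2
  rw [h1]
  exact psd_trace_real hpsd

lemma trace_diagonal_mul (v : m → ℂ) (C : Matrix m m ℂ) :
    (Matrix.diagonal v * C).trace = ∑ i, v i * C i i := by
  simp [Matrix.trace, Matrix.diag, Matrix.mul_apply, Matrix.diagonal_apply, Finset.sum_ite_eq]

/-- Hölder-type bound: for Hermitian `H` and `0 ≤ B ≤ 1`,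
`|Re Tr(H B)| ≤ ‖H‖₁`. -/
lemma holder_bound {H B : Matrix m m ℂ} (hH : H.IsHermitian) (hB : B.PosSemidef)
    (hB1 : ((1 : Matrix m m ℂ) - B).PosSemidef) :
    |((H * B).trace).re| ≤ traceNorm H := by
  set U : Matrix m m ℂ := (hH.eigenvectorUnitary : Matrix m m ℂ) with hU
  have hUU : star U * U = 1 := Unitary.coe_star_mul_self hH.eigenvectorUnitary
  set lam := hH.eigenvalues with hlam
  set C : Matrix m m ℂ := star U * B * U with hC
  have hCpsd : C.PosSemidef := by
    rw [hC, Matrix.star_eq_conjTranspose]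
    exact hB.conjTranspose_mul_mul_same U
  have hC1 : ((1 : Matrix m m ℂ) - C).PosSemidef := by
    have h2 : Uᴴ * ((1 : Matrix m m ℂ) - B) * U = 1 - Uᴴ * B * U := by
      rw [Matrix.mul_sub, Matrix.mul_one, Matrix.sub_mul, ← Matrix.star_eq_conjTranspose, hUU]
    rw [hC, Matrix.star_eq_conjTranspose, ← h2]
    exact hB1.conjTranspose_mul_mul_same U
  have hTr0 : (H * B).trace = (Matrix.diagonal (RCLike.ofReal ∘ lam) * C).trace := by
    conv_lhs => rw [hH.spectral_theorem, Unitary.conjStarAlgAut_apply]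
    rw [show (U * Matrix.diagonal (RCLike.ofReal ∘ lam) * star U) * B
          = U * (Matrix.diagonal (RCLike.ofReal ∘ lam) * star U * B) by
        simp [Matrix.mul_assoc]]
    rw [Matrix.trace_mul_comm, hC]
    simp [Matrix.mul_assoc]
  have hofReal : ∀ r : ℝ, (RCLike.ofReal r : ℂ) = (r : ℂ) := fun r => rfl
  have hTr : (H * B).trace = ∑ i, (lam i : ℂ) * C i i := by
    rw [hTr0, trace_diagonal_mul]
    exact Finset.sum_congr rfl fun i _ => rfl
  have hCdiag : ∀ i, 0 ≤ (C i i).re ∧ (C i i).re ≤ 1 := by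
    intro i
    have ha : 0 ≤ (C i i).re := by
      have := hCpsd.re_dotProduct_nonneg (Pi.single i 1)
      simpa [dotProduct, Matrix.mulVec, Pi.single_apply, Finset.sum_ite_eq] using this
    have hb : 0 ≤ (((1 : Matrix m m ℂ) - C) i i).re := by
      have := hC1.re_dotProduct_nonneg (Pi.single i 1)
      simpa [dotProduct, Matrix.mulVec, Pi.single_apply, Finset.sum_ite_eq] using this
    have hc : (((1 : Matrix m m ℂ) - C) i i).re = 1 - (C i i).re := by
      simp [Matrix.sub_apply, Matrix.one_apply]
    constructor
    · exact ha
    · rw [hc] at hb; linarith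
  have hre : ((H * B).trace).re = ∑ i, lam i * (C i i).re := by
    rw [hTr, Complex.re_sum]
    exact Finset.sum_congr rfl fun i _ => Complex.re_ofReal_mul _ _
  have hTN : traceNorm H = ∑ i, |lam i| := by
    have hpsd : (Hᴴ * H).PosSemidef := Matrix.posSemidef_conjTranspose_mul_self H
    set K : Matrix m m ℂ := U * Matrix.diagonal (fun i => ((|lam i| : ℝ) : ℂ)) * star U with hK
    have hKpsd : K.PosSemidef := by
      have hd : (Matrix.diagonal (fun i => ((|lam i| : ℝ) : ℂ))).PosSemidef := by
        refine Matrix.posSemidef_diagonal_iff.mpr fun i => ?_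
        rw [Complex.zero_le_real]
        exact abs_nonneg _
      rw [hK, Matrix.star_eq_conjTranspose]
      exact hd.mul_mul_conjTranspose_same U
    have conj2 : ∀ D E : Matrix m m ℂ,
        (U * D * star U) * (U * E * star U) = U * (D * E) * star U := by
      intro D E
      calc (U * D * star U) * (U * E * star U) = U * (D * ((star U * U) * E)) * star U := by
            simp only [Matrix.mul_assoc]
        _ = U * (D * E) * star U := by rw [hUU, Matrix.one_mul]
    have hKsq : K ^ 2 = Hᴴ * H := by
      have hHH : Hᴴ * H = H * H := by rw [hH]
      rw [pow_two, hK, hHH]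
      conv_rhs => rw [hH.spectral_theorem, Unitary.conjStarAlgAut_apply]
      rw [conj2, conj2]
      congr 2
      rw [Matrix.diagonal_mul_diagonal, Matrix.diagonal_mul_diagonal]
      refine congrArg Matrix.diagonal (funext fun i => ?_)
      calc ((|lam i| : ℝ) : ℂ) * ((|lam i| : ℝ) : ℂ) = ((|lam i| * |lam i| : ℝ) : ℂ) :=
            (Complex.ofReal_mul _ _).symm
        _ = ((lam i * lam i : ℝ) : ℂ) := by rw [abs_mul_abs_self]
        _ = (RCLike.ofReal ∘ lam) i * (RCLike.ofReal ∘ lam) i := Complex.ofReal_mul _ _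
    have hKeq : K = psdSqrtOld hpsd := psdSqrtOld_unique hpsd hKpsd (by rw [← pow_two]; exact hKsq)
    have hKtr : traceNorm H = K.trace.re := by
      rw [traceNorm]
      exact congrArg (fun Z => (Matrix.trace Z).re) hKeq.symm
    rw [hKtr, hK, Matrix.trace_mul_cycle, hUU, Matrix.one_mul]
    simp [Matrix.trace_diagonal, Complex.re_sum]
  rw [hre, hTN]
  calc |∑ i, lam i * (C i i).re| ≤ ∑ i, |lam i * (C i i).re| := Finset.abs_sum_le_sum_abs _ _
    _ ≤ ∑ i, |lam i| := by
        refine Finset.sum_le_sum fun i _ => ?_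
        rw [abs_mul]
        have h0 := (hCdiag i).1
        have h1 := (hCdiag i).2
        rw [abs_of_nonneg h0]
        nlinarith [abs_nonneg (lam i)]

lemma traceNorm_nonneg (Xm : Matrix m m ℂ) : 0 ≤ traceNorm Xm :=
  (psd_trace_real (psdSqrtOld_psd (Matrix.posSemidef_conjTranspose_mul_self Xm))).2

end PTAux
namespace PTAux
open Matrix
open scoped Classical
set_option linter.unusedSectionVars false

variable {d n : ℕ}

lemma combine_mem {α : Type*} {I : Finset (Fin n)} (x : (i : I) → α)
    (c : (j : {j : Fin n // j ∉ I}) → α) (j : Fin n) (hj : j ∈ I) :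
    combine I x c j = x ⟨j, hj⟩ := dif_pos hj

lemma combine_not_mem {α : Type*} {I : Finset (Fin n)} (x : (i : I) → α)
    (c : (j : {j : Fin n // j ∉ I}) → α) (j : Fin n) (hj : j ∉ I) :
    combine I x c j = c ⟨j, hj⟩ := dif_neg hj

lemma sum_pi_split (F : (Fin n → Fin d) → ℂ) (I : Finset (Fin n)) :
    ∑ a : Fin n → Fin d, F a
      = ∑ x : (i : I) → Fin d, ∑ c : (j : {j : Fin n // j ∉ I}) → Fin d,
          F (combine I x c) := by
  rw [← ((Equiv.piEquivPiSubtypeProd (fun j : Fin n => j ∈ I)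
      (fun _ => Fin d)).symm.sum_comp F), Fintype.sum_prod_type]
  rfl

lemma trace_mul_eq {α : Type*} [Fintype α] (A B : Matrix α α ℂ) :
    (A * B).trace = ∑ a, ∑ b, A a b * B b a := by
  simp [Matrix.trace, Matrix.diag, Matrix.mul_apply]

lemma trace_mul_tens_marginal (ρn : MatN d n) (I : Finset (Fin n)) (h : Fin n → Mat d)
    (h1 : ∀ j, j ∉ I → h j = 1) :
    (ρn * tens h).trace = (marginal ρn I * tens (fun i : I => h (↑i))).trace := by
  have hkey : ∀ (x y : (i : I) → Fin d) (c c' : (j : {j : Fin n // j ∉ I}) → Fin d),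
      tens h (combine I y c') (combine I x c)
        = (if c' = c then (1:ℂ) else 0) * tens (fun i : I => h (↑i)) y x := by
    intro x y c c'
    rw [tens_apply, ← Fintype.prod_subtype_mul_prod_subtype (fun j : Fin n => j ∈ I)
      (fun j => h j (combine I y c' j) (combine I x c j)), mul_comm]
    congr 1
    · have heach : ∀ j : {j : Fin n // ¬ j ∈ I}, h ↑j (combine I y c' ↑j) (combine I x c ↑j)
          = if c' j = c j then (1:ℂ) else 0 := by
        intro j
        rw [combine_not_mem y c' _ j.2, combine_not_mem x c _ j.2, h1 _ j.2, Matrix.one_apply]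
      rw [Finset.prod_congr rfl (fun j _ => heach j), Finset.prod_boole]
      by_cases hc : c' = c
      · simp [hc]
      · simp only [hc, if_false, ite_eq_right_iff, one_ne_zero]
        intro hall
        exact hc (funext fun j => hall j (Finset.mem_univ j))
    · rw [tens_apply]
      refine Finset.prod_congr ?_ fun i _ => ?_
      · congr!
      · rw [combine_mem y c' _ i.2, combine_mem x c _ i.2]
  rw [trace_mul_eq, trace_mul_eq, sum_pi_split _ I]
  calc
    ∑ x : (i : I) → Fin d, ∑ c, ∑ b : Fin n → Fin d,
        ρn (combine I x c) b * tens h b (combine I x c)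
      = ∑ x : (i : I) → Fin d, ∑ c, ∑ y : (i : I) → Fin d, ∑ c',
          ρn (combine I x c) (combine I y c')
            * tens h (combine I y c') (combine I x c) := by
        refine Finset.sum_congr rfl fun x _ => Finset.sum_congr rfl fun c _ => ?_
        exact sum_pi_split _ I
    _ = ∑ x : (i : I) → Fin d, ∑ c, ∑ y : (i : I) → Fin d,
          ρn (combine I x c) (combine I y c) * tens (fun i : I => h (↑i)) y x := by
        refine Finset.sum_congr rfl fun x _ => Finset.sum_congr rfl fun c _ =>
          Finset.sum_congr rfl fun y _ => ?_
        calc ∑ c', ρn (combine I x c) (combine I y c')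
              * tens h (combine I y c') (combine I x c)
            = ∑ c', (if c' = c then
                ρn (combine I x c) (combine I y c')
                  * tens (fun i : I => h (↑i)) y x else 0) := by
              refine Finset.sum_congr rfl fun c' _ => ?_
              rw [hkey]
              by_cases hc : c' = c
              · simp [hc]
              · simp [hc]
          _ = ρn (combine I x c) (combine I y c) * tens (fun i : I => h (↑i)) y x := by
              rw [Finset.sum_ite_eq' Finset.univ c]
              simp
    _ = ∑ x : (i : I) → Fin d, ∑ y : (i : I) → Fin d,
          marginal ρn I x y * tens (fun i : I => h (↑i)) y x := by
        refine Finset.sum_congr rfl fun x _ => ?_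
        rw [Finset.sum_comm]
        refine Finset.sum_congr rfl fun y _ => ?_
        rw [show marginal ρn I x y = ∑ c, ρn (combine I x c) (combine I y c) from rfl,
          Finset.sum_mul]

lemma sum_povm_filter {X : Type*} [Fintype X] [DecidableEq X] (M : X → Mat d)
    (hM1 : ∑ x, M x = 1) (s : Finset (Fin n)) (σ : Fin n → X) :
    ∑ xs ∈ Finset.univ.filter (fun xs : Fin n → X => ∀ j ∈ s, xs j = σ j),
        tens (fun i : Fin n => M (xs i))
      = tens (fun j : Fin n => if j ∈ s then M (σ j) else 1) := by
  ext a b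
  rw [Matrix.sum_apply]
  have lhs_eq : ∑ xs ∈ Finset.univ.filter (fun xs : Fin n → X => ∀ j ∈ s, xs j = σ j),
      tens (fun i : Fin n => M (xs i)) a b
      = ∑ xs : Fin n → X, ∏ j, (fun (j : Fin n) (y : X) =>
          if j ∈ s then (if y = σ j then M y (a j) (b j) else 0)
          else M y (a j) (b j)) j (xs j) := by
    rw [Finset.sum_filter]
    refine Finset.sum_congr rfl fun xs _ => ?_
    by_cases hxs : ∀ j ∈ s, xs j = σ j
    · rw [if_pos hxs, tens_apply]
      refine Finset.prod_congr rfl fun j _ => ?_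
      by_cases hj : j ∈ s
      · simp only [hj, if_true, hxs j hj, if_pos]
      · simp only [hj, if_false]
    · rw [if_neg hxs]
      push_neg at hxs
      obtain ⟨j, hjs, hj⟩ := hxs
      refine (Finset.prod_eq_zero (Finset.mem_univ j) ?_).symm
      simp only [hjs, if_true, hj, if_false]
  rw [lhs_eq, tens_apply]
  refine ((Fintype.prod_sum (fun (j : Fin n) (y : X) =>
      if j ∈ s then (if y = σ j then M y (a j) (b j) else 0)
      else M y (a j) (b j))).symm).trans ?_
  refine Finset.prod_congr rfl fun j _ => ?_
  rw [show ((if j ∈ s then M (σ j) else 1) : Mat d) (a j) (b j)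
      = if j ∈ s then M (σ j) (a j) (b j) else (1 : Mat d) (a j) (b j) from
    apply_ite (fun (Q : Mat d) => Q (a j) (b j)) _ _ _]
  by_cases hj : j ∈ s
  · simp only [hj, if_true]
    rw [Finset.sum_ite_eq' Finset.univ (σ j)]
    simp
  · simp only [hj, if_false]
    rw [show ∑ y : X, M y (a j) (b j) = (∑ y, M y) (a j) (b j) from (Matrix.sum_apply _ _ _ _).symm,
      hM1]

lemma marginal_isHermitian (ρn : MatN d n) (hρn : ρn.IsHermitian) (I : Finset (Fin n)) :
    (marginal ρn I).IsHermitian := by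
  show (marginal ρn I)ᴴ = marginal ρn I
  ext x y
  rw [Matrix.conjTranspose_apply]
  show star (marginal ρn I y x) = marginal ρn I x y
  rw [show marginal ρn I y x = ∑ c, ρn (combine I y c) (combine I x c) from rfl, star_sum]
  exact Finset.sum_congr rfl fun c _ => hρn.apply _ _

lemma tens_isHermitian {ι : Type*} [Fintype ι] {N : ι → Mat d}
    (h : ∀ i, (N i).IsHermitian) : (tens N).IsHermitian := by
  show (tens N)ᴴ = tens N
  have hN : (fun i => (N i)ᴴ) = N := funext h
  rw [tens_conjTranspose, hN]

end PTAux
namespace PTAux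
open Matrix
open scoped Classical ComplexOrder
set_option linter.unusedSectionVars false

variable {d n : ℕ} {X : Type*} [Fintype X] [DecidableEq X]

lemma povmTensor_eq_tens (M : X → Mat d) (xs : Fin n → X) :
    povmTensor M xs = tens (fun i => M (xs i)) := rfl

lemma tpowOn_eq_tens (ρ : Mat d) (I : Finset (Fin n)) :
    tpowOn ρ I = tens (fun _ : I => ρ) := rfl

lemma P_nonneg {ρn : MatN d n} (hρn : ρn.PosSemidef) {M : X → Mat d}
    (hM : ∀ x, (M x).PosSemidef) (xs : Fin n → X) :
    0 ≤ ((ρn * povmTensor M xs).trace).re :=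
  (psd_mul_trace_real hρn (by rw [povmTensor_eq_tens]; exact tens_psd fun i => hM _)).2

lemma sum_P_eq_one {ρn : MatN d n} (hρn : ρn.trace = 1) {M : X → Mat d}
    (hM1 : ∑ x, M x = 1) :
    ∑ xs : Fin n → X, ((ρn * povmTensor M xs).trace).re = 1 := by
  have h : ∑ xs : Fin n → X, (ρn * povmTensor M xs).trace = 1 := by
    simp only [povmTensor_eq_tens]
    rw [← Matrix.trace_sum, ← Finset.mul_sum, sum_tens M hM1, mul_one, hρn]
  calc ∑ xs : Fin n → X, ((ρn * povmTensor M xs).trace).re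
      = (∑ xs : Fin n → X, (ρn * povmTensor M xs).trace).re := (Complex.re_sum _ _).symm
    _ = 1 := by rw [h]; rfl

lemma p_nonneg {ρ : Mat d} (hρ : IsDensity ρ) {M : X → Mat d} (hM : ∀ x, (M x).PosSemidef)
    (x : X) : 0 ≤ ((ρ * M x).trace).re :=
  (psd_mul_trace_real hρ.1 (hM x)).2

lemma p_le_one {ρ : Mat d} (hρ : IsDensity ρ) {M : X → Mat d} (hM : ∀ x, (M x).PosSemidef)
    (hM1 : ∑ x, M x = 1) (x : X) : ((ρ * M x).trace).re ≤ 1 := by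
  have hOneSub : ((1 : Mat d) - M x).PosSemidef := by
    have he : (1 : Mat d) - M x = ∑ y ∈ Finset.univ.erase x, M y := by
      rw [← hM1]
      exact (Finset.sum_erase_eq_sub (Finset.mem_univ x)).symm
    rw [he]
    exact psd_sum _ _ fun y _ => hM y
  have h0 : 0 ≤ ((ρ * ((1 : Mat d) - M x)).trace).re := (psd_mul_trace_real hρ.1 hOneSub).2
  have h1 : (ρ * ((1 : Mat d) - M x)).trace = ρ.trace - (ρ * M x).trace := by
    rw [Matrix.mul_sub, Matrix.mul_one, Matrix.trace_sub]
  rw [h1, hρ.2] at h0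
  have : ((1 : ℂ) - (ρ * M x).trace).re = 1 - ((ρ * M x).trace).re := by
    simp [Complex.sub_re]
  linarith [this ▸ h0]

lemma F_close {ρ : Mat d} (hρ : IsDensity ρ) {ρn : MatN d n} (hρn : IsDensity ρn)
    {M : X → Mat d} (hM : ∀ x, (M x).PosSemidef) (hM1 : ∑ x, M x = 1)
    (s : Finset (Fin n)) (σ : Fin n → X) :
    |(∑ xs ∈ Finset.univ.filter (fun xs : Fin n → X => ∀ j ∈ s, xs j = σ j),
        ((ρn * povmTensor M xs).trace).re)
      - ∏ i : s, ((ρ * M (σ ↑i)).trace).re|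
      ≤ traceNorm (marginal ρn s - tpowOn ρ s) := by
  set h : Fin n → Mat d := fun j => if j ∈ s then M (σ j) else 1 with hh
  have h1 : ∀ j, j ∉ s → h j = 1 := fun j hj => if_neg hj
  have htensI : (fun i : s => h (↑i)) = (fun i : s => M (σ ↑i)) :=
    funext fun i => if_pos i.2
  have hsumT : ∑ xs ∈ Finset.univ.filter (fun xs : Fin n → X => ∀ j ∈ s, xs j = σ j),
      povmTensor M xs = tens h := by
    simp only [povmTensor_eq_tens]
    exact sum_povm_filter M hM1 s σ
  have hstep1 : ∑ xs ∈ Finset.univ.filter (fun xs : Fin n → X => ∀ j ∈ s, xs j = σ j),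
      ((ρn * povmTensor M xs).trace).re
      = ((marginal ρn s * tens (fun i : s => M (σ ↑i))).trace).re := by
    rw [← Complex.re_sum, ← Matrix.trace_sum, ← Finset.mul_sum, hsumT,
      trace_mul_tens_marginal ρn s h h1, htensI]
  have hprod : (tpowOn ρ s * tens (fun i : s => M (σ ↑i))).trace
      = ((∏ i : s, ((ρ * M (σ ↑i)).trace).re : ℝ) : ℂ) := by
    rw [tpowOn_eq_tens, tens_mul, trace_tens, Complex.ofReal_prod]
    exact Finset.prod_congr rfl fun i _ => (psd_mul_trace_real hρ.1 (hM _)).1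
  have hProdRe : ∏ i : s, ((ρ * M (σ ↑i)).trace).re
      = ((tpowOn ρ s * tens (fun i : s => M (σ ↑i))).trace).re := by
    rw [hprod, Complex.ofReal_re]
  rw [hstep1, hProdRe]
  have hsub : ((marginal ρn s * tens (fun i : s => M (σ ↑i))).trace).re
      - ((tpowOn ρ s * tens (fun i : s => M (σ ↑i))).trace).re
      = (((marginal ρn s - tpowOn ρ s) * tens (fun i : s => M (σ ↑i))).trace).re := by
    rw [Matrix.sub_mul, Matrix.trace_sub, Complex.sub_re]
  rw [hsub]
  refine holder_bound ?_ (tens_psd fun i => hM _) ?_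
  · exact (marginal_isHermitian ρn hρn.1.isHermitian s).sub
      (by rw [tpowOn_eq_tens]; exact tens_isHermitian fun _ => hρ.1.isHermitian)
  · exact one_sub_tens_psd M hM hM1 (fun i : s => σ ↑i)

end PTAux
namespace PTAux
open Matrix
open scoped Classical
set_option linter.unusedSectionVars false

lemma sum_singletons {n : ℕ} (g : Finset (Fin n) → ℝ) :
    ∑ I ∈ Finset.powersetCard 1 (Finset.univ : Finset (Fin n)), g I = ∑ i : Fin n, g {i} := by
  rw [Finset.powersetCard_one, Finset.sum_map]
  rfl

lemma sum_offDiag_pairs {n : ℕ} (g : Finset (Fin n) → ℝ) :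
    ∑ z ∈ (Finset.univ : Finset (Fin n)).offDiag, g {z.1, z.2}
      = 2 * ∑ I ∈ Finset.powersetCard 2 (Finset.univ : Finset (Fin n)), g I := by
  have hmaps : ∀ z ∈ (Finset.univ : Finset (Fin n)).offDiag,
      ({z.1, z.2} : Finset (Fin n)) ∈ Finset.powersetCard 2 (Finset.univ : Finset (Fin n)) := by
    intro z hz
    rw [Finset.mem_powersetCard]
    exact ⟨Finset.subset_univ _, Finset.card_pair (Finset.mem_offDiag.mp hz).2.2⟩
  rw [← Finset.sum_fiberwise_of_maps_to hmaps (fun z : Fin n × Fin n => g {z.1, z.2})]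
  rw [Finset.mul_sum]
  refine Finset.sum_congr rfl fun I hI => ?_
  obtain ⟨a, b, hab, rfl⟩ := Finset.card_eq_two.mp (Finset.mem_powersetCard.mp hI).2
  have hfib : ((Finset.univ : Finset (Fin n)).offDiag.filter
      (fun z : Fin n × Fin n => ({z.1, z.2} : Finset (Fin n)) = {a, b}))
      = {(a, b), (b, a)} := by
    ext z
    simp only [Finset.mem_filter, Finset.mem_offDiag, Finset.mem_univ, true_and,
      Finset.mem_insert, Finset.mem_singleton]
    constructor
    · rintro ⟨hne, hset⟩
      have h1 : z.1 = a ∨ z.1 = b := by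
        have hz1 : z.1 ∈ ({a, b} : Finset (Fin n)) := by rw [← hset]; simp
        simpa using hz1
      have h2 : z.2 = a ∨ z.2 = b := by
        have hz2 : z.2 ∈ ({a, b} : Finset (Fin n)) := by rw [← hset]; simp
        simpa using hz2
      rcases h1 with h1 | h1
      · left
        rcases h2 with h2 | h2
        · exact absurd (h1.trans h2.symm) hne
        · exact Prod.ext h1 h2
      · right
        rcases h2 with h2 | h2
        · exact Prod.ext h1 h2
        · exact absurd (h1.trans h2.symm) hne
    · rintro (rfl | rfl)
      · exact ⟨hab, rfl⟩
      · exact ⟨hab.symm, Finset.pair_comm _ _⟩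
  rw [hfib, Finset.sum_insert (by simp [Prod.ext_iff, hab]), Finset.sum_singleton]
  simp only []
  rw [show ({(b, a).1, (b, a).2} : Finset (Fin n)) = {b, a} from rfl,
    show ({(a, b).1, (a, b).2} : Finset (Fin n)) = {a, b} from rfl, Finset.pair_comm b a]
  ring

end PTAux
namespace PTAux
open Matrix
open scoped Classical ComplexOrder
set_option linter.unusedSectionVars false
set_option maxHeartbeats 1000000

lemma Gx_bound {d : ℕ} {X : Type*} [Fintype X] [DecidableEq X]
    (ρ : Mat d) (hρ : IsDensity ρ) {n : ℕ} (ρn : MatN d n) (hρn : IsDensity ρn)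
    (M : X → Mat d) (hM : ∀ x, (M x).PosSemidef) (hM1 : ∑ x, M x = 1)
    (hn : 2 ≤ n) (x : X) :
    ∑ xs : Fin n → X,
        ((n : ℝ)⁻¹ * ∑ i, (if xs i = x then (1 : ℝ) else 0)
          - (Matrix.trace (ρ * M x)).re) ^ 2 * (Matrix.trace (ρn * povmTensor M xs)).re
      ≤ (n : ℝ)⁻¹ * (n : ℝ)⁻¹ *
          (∑ z ∈ (Finset.univ : Finset (Fin n)).offDiag,
            traceNorm (marginal ρn {z.1, z.2} - tpowOn ρ {z.1, z.2}))
        + (n : ℝ)⁻¹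
        + 2 * ((n : ℝ)⁻¹ * ∑ i : Fin n,
            traceNorm (marginal ρn {i} - tpowOn ρ {i})) := by
  have hn0 : (0:ℝ) < n := by
    have h2 : (2:ℝ) ≤ (n:ℝ) := by exact_mod_cast hn
    linarith
  set P : (Fin n → X) → ℝ := fun xs => (Matrix.trace (ρn * povmTensor M xs)).re with hPdef
  set p : ℝ := (Matrix.trace (ρ * M x)).re with hpdef
  set ε : Finset (Fin n) → ℝ := fun I => traceNorm (marginal ρn I - tpowOn ρ I) with hεdef
  have hP0 : ∀ xs, 0 ≤ P xs := fun xs => P_nonneg hρn.1 hM xs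
  have hPsum : ∑ xs : Fin n → X, P xs = 1 := sum_P_eq_one hρn.2 hM1
  have hp0 : 0 ≤ p := p_nonneg hρ hM x
  have hp1 : p ≤ 1 := p_le_one hρ hM hM1 x
  have hε0 : ∀ I, 0 ≤ ε I := fun I => traceNorm_nonneg _
  set q : Fin n → ℝ := fun i =>
    ∑ xs ∈ Finset.univ.filter (fun xs : Fin n → X => xs i = x), P xs with hqdef
  set r : Fin n → Fin n → ℝ := fun i j =>
    ∑ xs ∈ Finset.univ.filter (fun xs : Fin n → X => xs i = x ∧ xs j = x), P xs with hrdef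
  -- closeness of q to p
  have hq : ∀ i, |q i - p| ≤ ε {i} := by
    intro i
    have hF := F_close hρ hρn hM hM1 {i} (fun _ => x)
    have h1 : (∑ xs ∈ Finset.univ.filter
          (fun xs : Fin n → X => ∀ j ∈ ({i} : Finset (Fin n)), xs j = x),
          (Matrix.trace (ρn * povmTensor M xs)).re) = q i :=
      Finset.sum_congr (Finset.filter_congr fun xs _ => by simp) fun _ _ => rfl
    have h2 : (∏ _i' : ({i} : Finset (Fin n)), (Matrix.trace (ρ * M x)).re) = p := by
      rw [Finset.prod_const, Finset.card_univ, Fintype.card_coe, Finset.card_singleton, pow_one]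
    rw [← h1, ← h2]
    exact hF
  have hr_close : ∀ i j, i ≠ j → |r i j - p ^ 2| ≤ ε {i, j} := by
    intro i j hij
    have hF := F_close hρ hρn hM hM1 {i, j} (fun _ => x)
    have h1 : (∑ xs ∈ Finset.univ.filter
          (fun xs : Fin n → X => ∀ k ∈ ({i, j} : Finset (Fin n)), xs k = x),
          (Matrix.trace (ρn * povmTensor M xs)).re) = r i j :=
      Finset.sum_congr (Finset.filter_congr fun xs _ => by simp) fun _ _ => rfl
    have h2 : (∏ _i' : ({i, j} : Finset (Fin n)), (Matrix.trace (ρ * M x)).re) = p ^ 2 := by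
      rw [Finset.prod_const, Finset.card_univ, Fintype.card_coe, Finset.card_pair hij]
    rw [← h1, ← h2]
    exact hF
  have hq1 : ∀ i, q i ≤ 1 := by
    intro i
    calc q i ≤ ∑ xs : Fin n → X, P xs :=
          Finset.sum_le_sum_of_subset_of_nonneg (Finset.filter_subset _ _)
            (fun xs _ _ => hP0 xs)
      _ = 1 := hPsum
  have hr_diag : ∀ i, r i i = q i :=
    fun i => Finset.sum_congr (Finset.filter_congr fun xs _ => by simp) fun _ _ => rfl
  -- expectation identities
  have hmatch1 : ∀ i, (∑ xs : Fin n → X, (if xs i = x then (1:ℝ) else 0) * P xs) = q i := by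
    intro i
    rw [show q i = ∑ xs ∈ Finset.univ.filter (fun xs : Fin n → X => xs i = x), P xs from rfl,
      Finset.sum_filter]
    refine Finset.sum_congr rfl fun xs _ => ?_
    by_cases hc : xs i = x <;> simp [hc]
  have hmatch2 : ∀ i j, (∑ xs : Fin n → X,
      ((if xs i = x then (1:ℝ) else 0) * (if xs j = x then (1:ℝ) else 0)) * P xs) = r i j := by
    intro i j
    rw [show r i j = ∑ xs ∈ Finset.univ.filter
        (fun xs : Fin n → X => xs i = x ∧ xs j = x), P xs from rfl,
      Finset.sum_filter]
    refine Finset.sum_congr rfl fun xs _ => ?_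
    rw [ite_zero_mul_ite_zero]
    by_cases hc : xs i = x ∧ xs j = x <;> simp [hc]
  have hE1 : ∑ xs : Fin n → X,
      ((n : ℝ)⁻¹ * ∑ i, (if xs i = x then (1:ℝ) else 0)) * P xs
      = (n:ℝ)⁻¹ * ∑ i, q i := by
    calc ∑ xs : Fin n → X, ((n : ℝ)⁻¹ * ∑ i, (if xs i = x then (1:ℝ) else 0)) * P xs
        = (n:ℝ)⁻¹ * ∑ xs : Fin n → X, ∑ i, (if xs i = x then (1:ℝ) else 0) * P xs := by
          rw [Finset.mul_sum]
          refine Finset.sum_congr rfl fun xs _ => ?_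
          rw [mul_assoc, Finset.sum_mul]
      _ = (n:ℝ)⁻¹ * ∑ i, ∑ xs : Fin n → X, (if xs i = x then (1:ℝ) else 0) * P xs := by
          rw [Finset.sum_comm]
      _ = (n:ℝ)⁻¹ * ∑ i, q i := by
          rw [Finset.sum_congr rfl fun i _ => hmatch1 i]
  have hE2 : ∑ xs : Fin n → X,
      ((n : ℝ)⁻¹ * ∑ i, (if xs i = x then (1:ℝ) else 0)) ^ 2 * P xs
      = (n:ℝ)⁻¹ * (n:ℝ)⁻¹ * ∑ i, ∑ j, r i j := by
    calc ∑ xs : Fin n → X, ((n : ℝ)⁻¹ * ∑ i, (if xs i = x then (1:ℝ) else 0)) ^ 2 * P xs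
        = (n:ℝ)⁻¹ * (n:ℝ)⁻¹ * ∑ xs : Fin n → X, ∑ i, ∑ j,
            ((if xs i = x then (1:ℝ) else 0) * (if xs j = x then (1:ℝ) else 0)) * P xs := by
          rw [Finset.mul_sum]
          refine Finset.sum_congr rfl fun xs _ => ?_
          have hSS : (∑ i, (if xs i = x then (1:ℝ) else 0))
                * (∑ j, (if xs j = x then (1:ℝ) else 0))
              = ∑ i, ∑ j, (if xs i = x then (1:ℝ) else 0) * (if xs j = x then (1:ℝ) else 0) :=
            Finset.sum_mul_sum _ _ _ _
          calc ((n:ℝ)⁻¹ * ∑ i, (if xs i = x then (1:ℝ) else 0)) ^ 2 * P xs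
              = (n:ℝ)⁻¹ * (n:ℝ)⁻¹ * (((∑ i, (if xs i = x then (1:ℝ) else 0))
                  * (∑ j, (if xs j = x then (1:ℝ) else 0))) * P xs) := by ring
            _ = (n:ℝ)⁻¹ * (n:ℝ)⁻¹ * ((∑ i, ∑ j, (if xs i = x then (1:ℝ) else 0)
                  * (if xs j = x then (1:ℝ) else 0)) * P xs) := by rw [hSS]
            _ = (n:ℝ)⁻¹ * (n:ℝ)⁻¹ * (∑ i, ∑ j, ((if xs i = x then (1:ℝ) else 0)
                  * (if xs j = x then (1:ℝ) else 0)) * P xs) := by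
                rw [Finset.sum_mul]
                congr 1
                refine Finset.sum_congr rfl fun i _ => ?_
                exact Finset.sum_mul _ _ _
      _ = (n:ℝ)⁻¹ * (n:ℝ)⁻¹ * ∑ i, ∑ j, r i j := by
          congr 1
          rw [Finset.sum_comm]
          refine Finset.sum_congr rfl fun i _ => ?_
          rw [Finset.sum_comm]
          exact Finset.sum_congr rfl fun j _ => hmatch2 i j
  -- expansion of the quadratic
  have hG : ∑ xs : Fin n → X,
      ((n : ℝ)⁻¹ * ∑ i, (if xs i = x then (1:ℝ) else 0) - p) ^ 2 * P xs
      = (n:ℝ)⁻¹ * (n:ℝ)⁻¹ * (∑ i, ∑ j, r i j)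
        - 2 * p * ((n:ℝ)⁻¹ * ∑ i, q i) + p ^ 2 := by
    have hexp : ∀ xs : Fin n → X,
        ((n : ℝ)⁻¹ * ∑ i, (if xs i = x then (1:ℝ) else 0) - p) ^ 2 * P xs
        = ((n : ℝ)⁻¹ * ∑ i, (if xs i = x then (1:ℝ) else 0)) ^ 2 * P xs
          - 2 * p * (((n : ℝ)⁻¹ * ∑ i, (if xs i = x then (1:ℝ) else 0)) * P xs)
          + p ^ 2 * P xs := fun xs => by ring
    rw [Finset.sum_congr rfl fun xs _ => hexp xs]
    rw [Finset.sum_add_distrib, Finset.sum_sub_distrib, hE2, ← Finset.mul_sum, hE1,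
      ← Finset.mul_sum, hPsum, mul_one]
  rw [hG]
  -- split the double sum into off-diagonal and diagonal parts
  have hsplit : ∑ i, ∑ j, r i j
      = (∑ z ∈ (Finset.univ : Finset (Fin n)).offDiag, r z.1 z.2) + ∑ i, q i := by
    rw [← Finset.sum_product']
    rw [show (Finset.univ : Finset (Fin n)) ×ˢ (Finset.univ : Finset (Fin n))
        = (Finset.univ : Finset (Fin n)).diag ∪ (Finset.univ : Finset (Fin n)).offDiag from
      (Finset.diag_union_offDiag _).symm]
    rw [Finset.sum_union (Finset.disjoint_diag_offDiag _), Finset.sum_diag]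
    rw [Finset.sum_congr rfl fun i _ => hr_diag i]
    ring
  rw [hsplit]
  -- now the numeric bounds
  have hoff : ∑ z ∈ (Finset.univ : Finset (Fin n)).offDiag, r z.1 z.2
      ≤ ((n:ℝ) * (n:ℝ) - n) * p ^ 2
        + ∑ z ∈ (Finset.univ : Finset (Fin n)).offDiag, ε {z.1, z.2} := by
    have hcard : ((Finset.univ : Finset (Fin n)).offDiag.card : ℝ) = (n:ℝ) * (n:ℝ) - n := by
      rw [Finset.offDiag_card]
      simp only [Finset.card_univ, Fintype.card_fin]
      have h1 : n ≤ n * n := Nat.le_mul_of_pos_left n (by omega)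
      push_cast [Nat.cast_sub h1]
      ring
    calc ∑ z ∈ (Finset.univ : Finset (Fin n)).offDiag, r z.1 z.2
        ≤ ∑ z ∈ (Finset.univ : Finset (Fin n)).offDiag, (p ^ 2 + ε {z.1, z.2}) := by
          refine Finset.sum_le_sum fun z hz => ?_
          have hne := (Finset.mem_offDiag.mp hz).2.2
          have := abs_le.mp (hr_close z.1 z.2 hne)
          linarith [this.2]
      _ = ((n:ℝ) * (n:ℝ) - n) * p ^ 2
          + ∑ z ∈ (Finset.univ : Finset (Fin n)).offDiag, ε {z.1, z.2} := by
          rw [Finset.sum_add_distrib, Finset.sum_const, nsmul_eq_mul, hcard]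
  have hqi_sum_up : ∑ i : Fin n, q i ≤ n := by
    calc ∑ i : Fin n, q i ≤ ∑ _i : Fin n, (1:ℝ) := Finset.sum_le_sum fun i _ => hq1 i
      _ = n := by simp
  have hqi_sum_lo : (n:ℝ) * p - ∑ i : Fin n, ε {i} ≤ ∑ i : Fin n, q i := by
    have : ∑ i : Fin n, (p - ε {i}) ≤ ∑ i : Fin n, q i := by
      refine Finset.sum_le_sum fun i _ => ?_
      have := abs_le.mp (hq i)
      linarith [this.1]
    calc (n:ℝ) * p - ∑ i : Fin n, ε {i} = ∑ i : Fin n, (p - ε {i}) := by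
          rw [Finset.sum_sub_distrib, Finset.sum_const, nsmul_eq_mul]
          simp
      _ ≤ ∑ i : Fin n, q i := this
  -- final arithmetic
  set Soff : ℝ := ∑ z ∈ (Finset.univ : Finset (Fin n)).offDiag, ε {z.1, z.2} with hSoff
  set S1 : ℝ := ∑ i : Fin n, ε {i} with hS1
  have hSoff0 : 0 ≤ Soff := Finset.sum_nonneg fun z _ => hε0 _
  have hS10 : 0 ≤ S1 := Finset.sum_nonneg fun i _ => hε0 _
  have hinv0 : 0 ≤ (n:ℝ)⁻¹ := by positivity
  have hninv : (n:ℝ)⁻¹ * (n:ℝ) = 1 := inv_mul_cancel₀ (ne_of_gt hn0)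
  have hnne : (n:ℝ) ≠ 0 := ne_of_gt hn0
  have t1 : (n:ℝ)⁻¹ * (n:ℝ)⁻¹ * (∑ z ∈ (Finset.univ : Finset (Fin n)).offDiag, r z.1 z.2)
      ≤ (1 - (n:ℝ)⁻¹) * p ^ 2 + (n:ℝ)⁻¹ * (n:ℝ)⁻¹ * Soff := by
    have h := mul_le_mul_of_nonneg_left hoff (mul_nonneg hinv0 hinv0)
    calc (n:ℝ)⁻¹ * (n:ℝ)⁻¹ * (∑ z ∈ (Finset.univ : Finset (Fin n)).offDiag, r z.1 z.2)
        ≤ (n:ℝ)⁻¹ * (n:ℝ)⁻¹ * (((n:ℝ) * (n:ℝ) - n) * p ^ 2 + Soff) := h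
      _ = (1 - (n:ℝ)⁻¹) * p ^ 2 + (n:ℝ)⁻¹ * (n:ℝ)⁻¹ * Soff := by
          field_simp
  have t2 : (n:ℝ)⁻¹ * (n:ℝ)⁻¹ * (∑ i : Fin n, q i) ≤ (n:ℝ)⁻¹ := by
    have h := mul_le_mul_of_nonneg_left hqi_sum_up (mul_nonneg hinv0 hinv0)
    calc (n:ℝ)⁻¹ * (n:ℝ)⁻¹ * (∑ i : Fin n, q i) ≤ (n:ℝ)⁻¹ * (n:ℝ)⁻¹ * (n:ℝ) := h
      _ = (n:ℝ)⁻¹ := by rw [mul_assoc, inv_mul_cancel₀ hnne, mul_one]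
  have t3 : p - (n:ℝ)⁻¹ * S1 ≤ (n:ℝ)⁻¹ * (∑ i : Fin n, q i) := by
    have h := mul_le_mul_of_nonneg_left hqi_sum_lo hinv0
    calc p - (n:ℝ)⁻¹ * S1 = (n:ℝ)⁻¹ * ((n:ℝ) * p - S1) := by
          field_simp
      _ ≤ (n:ℝ)⁻¹ * (∑ i : Fin n, q i) := h
  have t4 : p * (p - (n:ℝ)⁻¹ * S1) ≤ p * ((n:ℝ)⁻¹ * (∑ i : Fin n, q i)) :=
    mul_le_mul_of_nonneg_left t3 hp0
  have t5 : p * ((n:ℝ)⁻¹ * S1) ≤ 1 * ((n:ℝ)⁻¹ * S1) :=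
    mul_le_mul_of_nonneg_right hp1 (mul_nonneg hinv0 hS10)
  have t6 : 0 ≤ (n:ℝ)⁻¹ * p ^ 2 := mul_nonneg hinv0 (sq_nonneg p)
  nlinarith [t1, t2, t4, t5, t6]

end PTAux
namespace PTAux
open Matrix
open scoped Classical ComplexOrder
set_option linter.unusedSectionVars false
set_option maxHeartbeats 1000000

lemma per_n_bound {d : ℕ} {X : Type*} [Fintype X] [DecidableEq X]
    (ρ : Mat d) (hρ : IsDensity ρ) {n : ℕ} (ρn : MatN d n) (hρn : IsDensity ρn)
    (M : X → Mat d) (hM : ∀ x, (M x).PosSemidef) (hM1 : ∑ x, M x = 1)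
    (δ : ℝ) (hδ : 0 < δ) (hn : 2 ≤ n) :
    ∑ xs ∈ Finset.univ.filter (fun xs : Fin n → X =>
        ∃ x : X, δ < |(n : ℝ)⁻¹ * ∑ i, (if xs i = x then (1 : ℝ) else 0) -
          (Matrix.trace (ρ * M x)).re|),
      (Matrix.trace (ρn * povmTensor M xs)).re
    ≤ (δ ^ 2)⁻¹ * (Fintype.card X) *
        ((∑ I ∈ Finset.powersetCard 2 (Finset.univ : Finset (Fin n)),
            traceNorm (marginal ρn I - tpowOn ρ I)) / (n.choose 2 : ℝ)
          + (n : ℝ)⁻¹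
          + 2 * ((∑ I ∈ Finset.powersetCard 1 (Finset.univ : Finset (Fin n)),
              traceNorm (marginal ρn I - tpowOn ρ I)) / (n.choose 1 : ℝ))) := by
  have hn0 : (0:ℝ) < n := by
    have h2 : (2:ℝ) ≤ (n:ℝ) := by exact_mod_cast hn
    linarith
  have hnne : (n:ℝ) ≠ 0 := ne_of_gt hn0
  have hP0 : ∀ xs : Fin n → X, 0 ≤ (Matrix.trace (ρn * povmTensor M xs)).re :=
    fun xs => P_nonneg hρn.1 hM xs
  have hδne : δ ≠ 0 := ne_of_gt hδ
  -- pointwise Markov bound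
  have hpoint : ∀ xs ∈ Finset.univ.filter (fun xs : Fin n → X =>
      ∃ x : X, δ < |(n : ℝ)⁻¹ * ∑ i, (if xs i = x then (1 : ℝ) else 0) -
        (Matrix.trace (ρ * M x)).re|),
      (Matrix.trace (ρn * povmTensor M xs)).re
        ≤ (δ ^ 2)⁻¹ * ∑ x : X, ((n : ℝ)⁻¹ * ∑ i, (if xs i = x then (1 : ℝ) else 0) -
            (Matrix.trace (ρ * M x)).re) ^ 2 * (Matrix.trace (ρn * povmTensor M xs)).re := by
    intro xs hxs
    obtain ⟨x₀, hx₀⟩ := (Finset.mem_filter.mp hxs).2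
    have h1 : δ ^ 2 ≤ ((n : ℝ)⁻¹ * ∑ i, (if xs i = x₀ then (1 : ℝ) else 0) -
        (Matrix.trace (ρ * M x₀)).re) ^ 2 := by
      have := pow_le_pow_left₀ hδ.le hx₀.le 2
      rwa [sq_abs] at this
    have hS : δ ^ 2 ≤ ∑ x : X, ((n : ℝ)⁻¹ * ∑ i, (if xs i = x then (1 : ℝ) else 0) -
        (Matrix.trace (ρ * M x)).re) ^ 2 :=
      le_trans h1 (Finset.single_le_sum
        (f := fun x : X => ((n : ℝ)⁻¹ * ∑ i, (if xs i = x then (1 : ℝ) else 0) -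
          (Matrix.trace (ρ * M x)).re) ^ 2)
        (fun x _ => sq_nonneg _) (Finset.mem_univ x₀))
    have hone : 1 ≤ (δ ^ 2)⁻¹ * ∑ x : X, ((n : ℝ)⁻¹ * ∑ i, (if xs i = x then (1 : ℝ) else 0) -
        (Matrix.trace (ρ * M x)).re) ^ 2 := by
      have hmul := mul_le_mul_of_nonneg_left hS (by positivity : (0:ℝ) ≤ (δ ^ 2)⁻¹)
      have : (δ ^ 2)⁻¹ * δ ^ 2 = 1 := by
        field_simp
      linarith
    calc (Matrix.trace (ρn * povmTensor M xs)).re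
        = 1 * (Matrix.trace (ρn * povmTensor M xs)).re := (one_mul _).symm
      _ ≤ ((δ ^ 2)⁻¹ * ∑ x : X, ((n : ℝ)⁻¹ * ∑ i, (if xs i = x then (1 : ℝ) else 0) -
            (Matrix.trace (ρ * M x)).re) ^ 2) * (Matrix.trace (ρn * povmTensor M xs)).re :=
          mul_le_mul_of_nonneg_right hone (hP0 xs)
      _ = (δ ^ 2)⁻¹ * ∑ x : X, ((n : ℝ)⁻¹ * ∑ i, (if xs i = x then (1 : ℝ) else 0) -
            (Matrix.trace (ρ * M x)).re) ^ 2 * (Matrix.trace (ρn * povmTensor M xs)).re := by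
          rw [mul_assoc, Finset.sum_mul]
  -- sum over the bad set
  have hstep1 : ∑ xs ∈ Finset.univ.filter (fun xs : Fin n → X =>
      ∃ x : X, δ < |(n : ℝ)⁻¹ * ∑ i, (if xs i = x then (1 : ℝ) else 0) -
        (Matrix.trace (ρ * M x)).re|),
      (Matrix.trace (ρn * povmTensor M xs)).re
      ≤ (δ ^ 2)⁻¹ * ∑ x : X, ∑ xs : Fin n → X,
          ((n : ℝ)⁻¹ * ∑ i, (if xs i = x then (1 : ℝ) else 0) -
            (Matrix.trace (ρ * M x)).re) ^ 2 * (Matrix.trace (ρn * povmTensor M xs)).re := by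
    calc ∑ xs ∈ Finset.univ.filter (fun xs : Fin n → X =>
          ∃ x : X, δ < |(n : ℝ)⁻¹ * ∑ i, (if xs i = x then (1 : ℝ) else 0) -
            (Matrix.trace (ρ * M x)).re|),
          (Matrix.trace (ρn * povmTensor M xs)).re
        ≤ ∑ xs ∈ Finset.univ.filter (fun xs : Fin n → X =>
            ∃ x : X, δ < |(n : ℝ)⁻¹ * ∑ i, (if xs i = x then (1 : ℝ) else 0) -
              (Matrix.trace (ρ * M x)).re|),
            (δ ^ 2)⁻¹ * ∑ x : X, ((n : ℝ)⁻¹ * ∑ i, (if xs i = x then (1 : ℝ) else 0) -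
              (Matrix.trace (ρ * M x)).re) ^ 2 * (Matrix.trace (ρn * povmTensor M xs)).re :=
          Finset.sum_le_sum hpoint
      _ ≤ ∑ xs : Fin n → X,
            (δ ^ 2)⁻¹ * ∑ x : X, ((n : ℝ)⁻¹ * ∑ i, (if xs i = x then (1 : ℝ) else 0) -
              (Matrix.trace (ρ * M x)).re) ^ 2 * (Matrix.trace (ρn * povmTensor M xs)).re := by
          refine Finset.sum_le_sum_of_subset_of_nonneg (Finset.filter_subset _ _)
            fun xs _ _ => ?_
          have : (0:ℝ) ≤ ∑ x : X, ((n : ℝ)⁻¹ * ∑ i, (if xs i = x then (1 : ℝ) else 0) -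
              (Matrix.trace (ρ * M x)).re) ^ 2 * (Matrix.trace (ρn * povmTensor M xs)).re :=
            Finset.sum_nonneg fun x _ => mul_nonneg (sq_nonneg _) (hP0 xs)
          positivity
      _ = (δ ^ 2)⁻¹ * ∑ x : X, ∑ xs : Fin n → X,
            ((n : ℝ)⁻¹ * ∑ i, (if xs i = x then (1 : ℝ) else 0) -
              (Matrix.trace (ρ * M x)).re) ^ 2 * (Matrix.trace (ρn * povmTensor M xs)).re := by
          rw [← Finset.mul_sum]
          congr 1
          rw [Finset.sum_comm]
  -- bound the inner x-sums via Gx_bound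
  set RHS1 : ℝ := (n : ℝ)⁻¹ * (n : ℝ)⁻¹ *
      (∑ z ∈ (Finset.univ : Finset (Fin n)).offDiag,
        traceNorm (marginal ρn {z.1, z.2} - tpowOn ρ {z.1, z.2}))
      + (n : ℝ)⁻¹
      + 2 * ((n : ℝ)⁻¹ * ∑ i : Fin n,
          traceNorm (marginal ρn {i} - tpowOn ρ {i})) with hRHS1
  have hstep2 : ∑ x : X, ∑ xs : Fin n → X,
      ((n : ℝ)⁻¹ * ∑ i, (if xs i = x then (1 : ℝ) else 0) -
        (Matrix.trace (ρ * M x)).re) ^ 2 * (Matrix.trace (ρn * povmTensor M xs)).re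
      ≤ (Fintype.card X) * RHS1 := by
    calc ∑ x : X, ∑ xs : Fin n → X,
        ((n : ℝ)⁻¹ * ∑ i, (if xs i = x then (1 : ℝ) else 0) -
          (Matrix.trace (ρ * M x)).re) ^ 2 * (Matrix.trace (ρn * povmTensor M xs)).re
        ≤ ∑ _x : X, RHS1 :=
          Finset.sum_le_sum fun x _ => Gx_bound ρ hρ ρn hρn M hM hM1 hn x
      _ = (Fintype.card X) * RHS1 := by
          rw [Finset.sum_const, nsmul_eq_mul, Finset.card_univ]
  -- convert RHS1 into the choose-normalized sums
  set S2 : ℝ := ∑ I ∈ Finset.powersetCard 2 (Finset.univ : Finset (Fin n)),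
      traceNorm (marginal ρn I - tpowOn ρ I) with hS2
  set S1 : ℝ := ∑ I ∈ Finset.powersetCard 1 (Finset.univ : Finset (Fin n)),
      traceNorm (marginal ρn I - tpowOn ρ I) with hS1
  have hS20 : 0 ≤ S2 := Finset.sum_nonneg fun I _ => traceNorm_nonneg _
  have hoffS2 : (∑ z ∈ (Finset.univ : Finset (Fin n)).offDiag,
      traceNorm (marginal ρn {z.1, z.2} - tpowOn ρ {z.1, z.2})) = 2 * S2 :=
    sum_offDiag_pairs (fun I => traceNorm (marginal ρn I - tpowOn ρ I))
  have hsingS1 : (∑ i : Fin n, traceNorm (marginal ρn {i} - tpowOn ρ {i})) = S1 :=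
    (sum_singletons (fun I => traceNorm (marginal ρn I - tpowOn ρ I))).symm
  have hchoose1 : ((n.choose 1 : ℕ) : ℝ) = (n : ℝ) := by
    rw [Nat.choose_one_right]
  have hchoose2 : ((n.choose 2 : ℕ) : ℝ) = (n : ℝ) * ((n : ℝ) - 1) / 2 :=
    Nat.cast_choose_two (K := ℝ) n
  have hd2pos : (0:ℝ) < (n : ℝ) * ((n : ℝ) - 1) / 2 := by
    have h2 : (2:ℝ) ≤ (n:ℝ) := by exact_mod_cast hn
    nlinarith
  have hRHSle : RHS1 ≤ S2 / (n.choose 2 : ℝ) + (n : ℝ)⁻¹ + 2 * (S1 / (n.choose 1 : ℝ)) := by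
    rw [hRHS1, hoffS2, hsingS1, hchoose1, hchoose2]
    have hq2 : (n : ℝ)⁻¹ * (n : ℝ)⁻¹ * (2 * S2) ≤ S2 / ((n : ℝ) * ((n : ℝ) - 1) / 2) := by
      rw [le_div_iff₀ hd2pos]
      have heq : (n : ℝ)⁻¹ * (n : ℝ)⁻¹ * (2 * S2) * ((n : ℝ) * ((n : ℝ) - 1) / 2)
          = S2 * (1 - (n:ℝ)⁻¹) := by
        field_simp
      rw [heq]
      have : 0 ≤ S2 * (n:ℝ)⁻¹ := mul_nonneg hS20 (by positivity)
      nlinarith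
    have hq1 : (n : ℝ)⁻¹ * S1 = S1 / (n : ℝ) := by
      rw [div_eq_inv_mul]
    rw [hq1]
    linarith
  -- put everything together
  have hmain := le_trans hstep1 (by
    have := mul_le_mul_of_nonneg_left hstep2 (by positivity : (0:ℝ) ≤ (δ ^ 2)⁻¹)
    linarith : ((δ ^ 2)⁻¹ * ∑ x : X, ∑ xs : Fin n → X,
        ((n : ℝ)⁻¹ * ∑ i, (if xs i = x then (1 : ℝ) else 0) -
          (Matrix.trace (ρ * M x)).re) ^ 2 * (Matrix.trace (ρn * povmTensor M xs)).re)
      ≤ (δ ^ 2)⁻¹ * ((Fintype.card X) * RHS1))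
  calc ∑ xs ∈ Finset.univ.filter (fun xs : Fin n → X =>
        ∃ x : X, δ < |(n : ℝ)⁻¹ * ∑ i, (if xs i = x then (1 : ℝ) else 0) -
          (Matrix.trace (ρ * M x)).re|),
      (Matrix.trace (ρn * povmTensor M xs)).re
      ≤ (δ ^ 2)⁻¹ * ((Fintype.card X) * RHS1) := hmain
    _ ≤ (δ ^ 2)⁻¹ * (Fintype.card X) *
        (S2 / (n.choose 2 : ℝ) + (n : ℝ)⁻¹ + 2 * (S1 / (n.choose 1 : ℝ))) := by
        rw [mul_assoc]
        refine mul_le_mul_of_nonneg_left ?_ (by positivity : (0:ℝ) ≤ (δ ^ 2)⁻¹)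
        exact mul_le_mul_of_nonneg_left hRHSle (by positivity)

end PTAux

open scoped Classical in
theorem stmt_13 {d : ℕ} {X : Type*} [Fintype X] [DecidableEq X]
    (ρ : Mat d) (hρ : IsDensity ρ)
    (ρseq : ∀ n, MatN d n) (hdens : ∀ n, IsDensity (ρseq n))
    (hwaiid : WeaklyAlmostIID ρ ρseq)
    (M : X → Mat d) (hM : ∀ x, (M x).PosSemidef) (hM1 : ∑ x, M x = 1)
    (δ : ℝ) (hδ : 0 < δ) :
    Tendsto (fun n : ℕ =>
        ∑ xs ∈ Finset.univ.filter (fun xs : Fin n → X =>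
            ∃ x : X, δ < |(n : ℝ)⁻¹ * ∑ i, (if xs i = x then (1 : ℝ) else 0) -
              (Matrix.trace (ρ * M x)).re|),
          (Matrix.trace (ρseq n * povmTensor M xs)).re)
      atTop (nhds 0) := by
  have hA1 := hwaiid 1 (by norm_num)
  have hA2 := hwaiid 2 (by norm_num)
  have hinv : Tendsto (fun n : ℕ => (n : ℝ)⁻¹) atTop (nhds 0) :=
    tendsto_inv_atTop_nhds_zero_nat
  have hf : Tendsto (fun n : ℕ => (δ ^ 2)⁻¹ * (Fintype.card X) *
      ((∑ I ∈ Finset.powersetCard 2 (Finset.univ : Finset (Fin n)),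
          traceNorm (marginal (ρseq n) I - tpowOn ρ I)) / (n.choose 2 : ℝ)
        + (n : ℝ)⁻¹
        + 2 * ((∑ I ∈ Finset.powersetCard 1 (Finset.univ : Finset (Fin n)),
            traceNorm (marginal (ρseq n) I - tpowOn ρ I)) / (n.choose 1 : ℝ))))
      atTop (nhds 0) := by
    have hsum := (hA2.add hinv).add (hA1.const_mul (2:ℝ))
    have := hsum.const_mul ((δ ^ 2)⁻¹ * (Fintype.card X))
    simpa using this
  refine tendsto_of_tendsto_of_tendsto_of_le_of_le' (tendsto_const_nhds) hf ?_ ?_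
  · refine Filter.Eventually.of_forall fun n => ?_
    exact Finset.sum_nonneg fun xs _ => PTAux.P_nonneg (hdens n).1 hM xs
  · refine Filter.eventually_atTop.mpr ⟨2, fun n hn => ?_⟩
    exact PTAux.per_n_bound ρ hρ (ρseq n) (hdens n) M hM hM1 δ hδ hn
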